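/- Under the state-space model conditions with twice differentiability and dominated differentiation, (d²/dy_t²) log p(y_t|y_{1:t-1},θ) + ((d/dy_t) log p(y_t|y_{1:t-1},θ))² = E[ (d²/dy_t²) log g_θ(y_t|X_t) + ((d/dy_t) log g_θ(y_t|X_t))² | y_{1:t}, θ ], expectation over the filtering distribution X_t ~ p(dx_t|y_{1:t},θ). -/

import Mathlib

open MeasureTheory Filter Topology Metric

/-- A.e.-strong-measurability of a pointwise derivative family. -/
lemma aesm_deriv_family {X : Type*} [MeasurableSpace X] (η : Measure X)
    (F F' : ℝ → X → ℝ)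
    (hmeas : ∀ y, AEStronglyMeasurable (F y) η)
    (hderiv : ∀ x y, HasDerivAt (fun z => F z x) (F' y x) y)
    (y : ℝ) : AEStronglyMeasurable (F' y) η := by
  have hu : Tendsto (fun n : ℕ => y + ((n : ℝ) + 1)⁻¹) atTop (𝓝[≠] y) := by
    rw [tendsto_nhdsWithin_iff]
    constructor
    · have : Tendsto (fun n : ℕ => ((n : ℝ) + 1)⁻¹) atTop (𝓝 0) :=
        tendsto_one_div_add_atTop_nhds_zero_nat.congr (by intro n; rw [one_div])
      simpa using tendsto_const_nhds.add this
    · filter_upwards with n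
      have : (0:ℝ) < ((n : ℝ) + 1)⁻¹ := by positivity
      simp only [Set.mem_compl_iff, Set.mem_singleton_iff]
      intro h
      nlinarith [add_left_cancel (a := y) (b := ((n:ℝ)+1)⁻¹) (c := 0) (by linarith)]
  refine aestronglyMeasurable_of_tendsto_ae atTop
    (f := fun n : ℕ => fun x => (F (y + ((n : ℝ) + 1)⁻¹) x - F y x) * ((n : ℝ) + 1))
    (fun n => ((hmeas _).sub (hmeas y)).mul_const _) ?_
  filter_upwards with x
  have h1 := (hasDerivAt_iff_tendsto_slope.mp (hderiv x y)).comp hu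
  refine h1.congr fun n => ?_
  have hne : ((n : ℝ) + 1) ≠ 0 := by positivity
  simp only [Function.comp, slope_def_field, add_sub_cancel_left]
  field_simp

theorem louis_identity_statespace_observation
    {X : Type*} [MeasurableSpace X] (η : Measure X) [SigmaFinite η]
    (predd : X → ℝ) (g : ℝ → X → ℝ)
    (hpred_nonneg : ∀ x, 0 ≤ predd x) (hpred_prob : ∫ x, predd x ∂η = 1)
    (hg_pos : ∀ y x, 0 < g y x)
    (hg_smooth : ∀ x, ContDiff ℝ 2 (fun y => g y x))
    (hg_int : ∀ y, Integrable (fun x => predd x * g y x) η)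
    (h3 h4 : X → ℝ) (h3_int : Integrable h3 η) (h4_int : Integrable h4 η)
    (hdom3 : ∀ y x, |predd x * deriv (fun z => g z x) y| ≤ h3 x)
    (hdom4 : ∀ y x, |predd x * deriv (deriv (fun z => g z x)) y| ≤ h4 x)
    (y₀ : ℝ) :
    deriv (deriv (fun y => Real.log (∫ x, predd x * g y x ∂η))) y₀ +
        (deriv (fun y => Real.log (∫ x, predd x * g y x ∂η)) y₀) ^ 2 =
      ∫ x, (deriv (deriv (fun y => Real.log (g y x))) y₀ +
          (deriv (fun y => Real.log (g y x)) y₀) ^ 2) *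
        (predd x * g y₀ x / ∫ x', predd x' * g y₀ x' ∂η) ∂η := by
  -- notation
  set g1 : ℝ → X → ℝ := fun y x => deriv (fun z => g z x) y with hg1
  set g2 : ℝ → X → ℝ := fun y x => deriv (deriv (fun z => g z x)) y with hg2
  set p : ℝ → ℝ := fun y => ∫ x, predd x * g y x ∂η with hp
  -- smoothness facts
  have hgd : ∀ x, Differentiable ℝ (fun y => g y x) := fun x =>
    (hg_smooth x).differentiable (by norm_num)
  have hg1cd : ∀ x, ContDiff ℝ 1 (deriv (fun y => g y x)) := by
    intro x
    have h2 : ContDiff ℝ ((1:ℕ) + 1) (fun y => g y x) := by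
      exact_mod_cast hg_smooth x
    exact (contDiff_succ_iff_deriv.mp h2).2.2
  have hg1d : ∀ x, Differentiable ℝ (deriv (fun y => g y x)) := fun x =>
    (hg1cd x).differentiable (by norm_num)
  have hd1 : ∀ x y, HasDerivAt (fun z => g z x) (g1 y x) y := fun x y =>
    ((hgd x) y).hasDerivAt
  have hd2 : ∀ x y, HasDerivAt (fun z => g1 z x) (g2 y x) y := fun x y =>
    ((hg1d x) y).hasDerivAt
  -- measurability
  have hmeas0 : ∀ y, AEStronglyMeasurable (fun x => predd x * g y x) η := fun y =>
    (hg_int y).aestronglyMeasurable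
  have hmeas1 : ∀ y, AEStronglyMeasurable (fun x => predd x * g1 y x) η := by
    refine aesm_deriv_family η (fun y x => predd x * g y x) _ hmeas0 ?_
    intro x y; exact (hd1 x y).const_mul (predd x)
  have hmeas2 : ∀ y, AEStronglyMeasurable (fun x => predd x * g2 y x) η := by
    refine aesm_deriv_family η (fun y x => predd x * g1 y x) _ hmeas1 ?_
    intro x y; exact (hd2 x y).const_mul (predd x)
  -- integrability of derivative families
  have hint1 : ∀ y, Integrable (fun x => predd x * g1 y x) η := fun y =>
    h3_int.mono' (hmeas1 y) (Filter.Eventually.of_forall fun x => by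
      rw [Real.norm_eq_abs]; exact hdom3 y x)
  have hint2 : ∀ y, Integrable (fun x => predd x * g2 y x) η := fun y =>
    h4_int.mono' (hmeas2 y) (Filter.Eventually.of_forall fun x => by
      rw [Real.norm_eq_abs]; exact hdom4 y x)
  -- differentiation under the integral sign
  have hp' : ∀ y, HasDerivAt p (∫ x, predd x * g1 y x ∂η) y := by
    intro y
    refine (hasDerivAt_integral_of_dominated_loc_of_deriv_le (Metric.ball_mem_nhds y one_pos)
      (Filter.Eventually.of_forall hmeas0) (hg_int y) (hmeas1 y)
      (Filter.Eventually.of_forall fun x => fun z _ => by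
        rw [Real.norm_eq_abs]; exact hdom3 z x) h3_int
      (Filter.Eventually.of_forall fun x => fun z _ =>
        (hd1 x z).const_mul (predd x))).2
  set q : ℝ → ℝ := fun y => ∫ x, predd x * g1 y x ∂η with hq
  have hq' : ∀ y, HasDerivAt q (∫ x, predd x * g2 y x ∂η) y := by
    intro y
    refine (hasDerivAt_integral_of_dominated_loc_of_deriv_le (Metric.ball_mem_nhds y one_pos)
      (Filter.Eventually.of_forall hmeas1) (hint1 y) (hmeas2 y)
      (Filter.Eventually.of_forall fun x => fun z _ => by
        rw [Real.norm_eq_abs]; exact hdom4 z x) h4_int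
      (Filter.Eventually.of_forall fun x => fun z _ =>
        (hd2 x z).const_mul (predd x))).2
  -- positivity of p
  have hpredd_int : Integrable predd η := by
    by_contra h
    rw [integral_undef h] at hpred_prob
    norm_num at hpred_prob
  have hppos : ∀ y, 0 < p y := by
    intro y
    rcases lt_or_eq_of_le (integral_nonneg (fun x =>
      mul_nonneg (hpred_nonneg x) (hg_pos y x).le) : 0 ≤ p y) with h | h
    · exact h
    · exfalso
      have hz : (fun x => predd x * g y x) =ᵐ[η] 0 := by
        rw [← integral_eq_zero_iff_of_nonneg
          (fun x => mul_nonneg (hpred_nonneg x) (hg_pos y x).le) (hg_int y)]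
        exact h.symm
      have hz' : predd =ᵐ[η] 0 := by
        filter_upwards [hz] with x hx
        have := (hg_pos y x).ne'
        simp only [Pi.zero_apply] at hx ⊢
        rcases mul_eq_zero.mp hx with h' | h'
        · exact h'
        · exact absurd h' this
      have h0 : (∫ x, predd x ∂η) = 0 := by
        rw [integral_congr_ae hz']; simp
      rw [h0] at hpred_prob
      norm_num at hpred_prob
  -- LHS computation
  have hlogp1 : ∀ y, HasDerivAt (fun z => Real.log (p z)) (q y / p y) y := fun y =>
    (hp' y).log (hppos y).ne'
  have hdlogp : deriv (fun z => Real.log (p z)) = fun y => q y / p y :=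
    funext fun y => (hlogp1 y).deriv
  have hlogp2 : HasDerivAt (fun y => q y / p y)
      (((∫ x, predd x * g2 y₀ x ∂η) * p y₀ - q y₀ * q y₀) / (p y₀) ^ 2) y₀ :=
    (hq' y₀).div (hp' y₀) (hppos y₀).ne'
  have hLHS : deriv (deriv (fun y => Real.log (p y))) y₀ +
      (deriv (fun y => Real.log (p y)) y₀) ^ 2 = (∫ x, predd x * g2 y₀ x ∂η) / p y₀ := by
    have e1 : deriv (fun y => Real.log (p y)) y₀ = q y₀ / p y₀ := (hlogp1 y₀).deriv
    have e2 : deriv (deriv (fun y => Real.log (p y))) y₀ =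
        ((∫ x, predd x * g2 y₀ x ∂η) * p y₀ - q y₀ * q y₀) / (p y₀) ^ 2 := by
      rw [hdlogp]; exact hlogp2.deriv
    have hp0 : p y₀ ≠ 0 := (hppos y₀).ne'
    rw [e2, e1]
    field_simp
    ring
  -- RHS integrand computation
  have hRHSint : ∀ x, (deriv (deriv (fun y => Real.log (g y x))) y₀ +
      (deriv (fun y => Real.log (g y x)) y₀) ^ 2) * (predd x * g y₀ x / p y₀) =
      (predd x * g2 y₀ x) / p y₀ := by
    intro x
    have hlg1 : ∀ y, HasDerivAt (fun z => Real.log (g z x)) (g1 y x / g y x) y := fun y =>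
      (hd1 x y).log (hg_pos y x).ne'
    have hdlg : deriv (fun z => Real.log (g z x)) = fun y => g1 y x / g y x :=
      funext fun y => (hlg1 y).deriv
    have hlg2 : HasDerivAt (fun y => g1 y x / g y x)
        ((g2 y₀ x * g y₀ x - g1 y₀ x * g1 y₀ x) / (g y₀ x) ^ 2) y₀ :=
      (hd2 x y₀).div (hd1 x y₀) (hg_pos y₀ x).ne'
    have e1 : deriv (fun y => Real.log (g y x)) y₀ = g1 y₀ x / g y₀ x := (hlg1 y₀).deriv
    have e2 : deriv (deriv (fun y => Real.log (g y x))) y₀ =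
        (g2 y₀ x * g y₀ x - g1 y₀ x * g1 y₀ x) / (g y₀ x) ^ 2 := by
      rw [hdlg]; exact hlg2.deriv
    have hg0 : g y₀ x ≠ 0 := (hg_pos y₀ x).ne'
    have hp0 : p y₀ ≠ 0 := (hppos y₀).ne'
    rw [e2, e1]
    field_simp
    ring
  calc deriv (deriv (fun y => Real.log (p y))) y₀ +
      (deriv (fun y => Real.log (p y)) y₀) ^ 2
      = (∫ x, predd x * g2 y₀ x ∂η) / p y₀ := hLHS
    _ = ∫ x, (predd x * g2 y₀ x) / p y₀ ∂η := (integral_div _ _).symm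
    _ = ∫ x, (deriv (deriv (fun y => Real.log (g y x))) y₀ +
          (deriv (fun y => Real.log (g y x)) y₀) ^ 2) * (predd x * g y₀ x / p y₀) ∂η := by
        exact integral_congr_ae (Filter.Eventually.of_forall fun x => (hRHSint x).symm)
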